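/- In the interpretability logic IL, the principle R_{2n+2} implies R_{2n+1}; specifically, substituting C_{n+1} := ⊤ and B_{n+1} := A_{n+1} in R_{2n+2} yields R_{2n+1} (using that IL proves A ▷ A and that □⊤ is provable). -/

import Mathlib

/-- Formulas of interpretability logic: propositional variables, ⊥, →, □, ▷. -/
inductive ILForm : Type
  | var : ℕ → ILForm
  | bot : ILForm
  | impl : ILForm → ILForm → ILForm
  | box : ILForm → ILForm
  | rhd : ILForm → ILForm → ILForm
  deriving DecidableEq

namespace ILForm

def neg (A : ILForm) : ILForm := impl A bot
def top : ILForm := neg bot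
def conj (A B : ILForm) : ILForm := neg (impl A (neg B))
def disj (A B : ILForm) : ILForm := impl (neg A) B
def dia (A : ILForm) : ILForm := neg (box (neg A))

end ILForm

infixr:30 " ⟹ " => ILForm.impl
infixl:65 " ⋀ " => ILForm.conj
infixl:64 " ⋁ " => ILForm.disj
infix:50 " ▷ " => ILForm.rhd
prefix:70 "□" => ILForm.box
prefix:70 "◇" => ILForm.dia
prefix:70 "∼" => ILForm.neg

/-- Propositional evaluation of a formula, treating boxed and ▷-formulas
(and variables) as atoms evaluated by `g`.  A formula is an instance of a
propositional tautology iff it evaluates to `true` under every such `g`. -/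
def ILForm.evalProp (g : ILForm → Bool) : ILForm → Bool
  | .bot => false
  | .impl a b => !(ILForm.evalProp g a) || ILForm.evalProp g b
  | f => g f

/-- Hilbert-style provability in the interpretability logic IL extended with
an additional set `Ax` of axioms. -/
inductive ILProv (Ax : Set ILForm) : ILForm → Prop
  | ax {A : ILForm} : A ∈ Ax → ILProv Ax A
  | taut {A : ILForm} : (∀ g : ILForm → Bool, A.evalProp g = true) → ILProv Ax A
  | L1 (A B : ILForm) : ILProv Ax ((□(A ⟹ B)) ⟹ ((□A) ⟹ (□B)))
  | L2 (A : ILForm) : ILProv Ax ((□A) ⟹ (□□A))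
  | L3 (A : ILForm) : ILProv Ax ((□((□A) ⟹ A)) ⟹ (□A))
  | J1 (A B : ILForm) : ILProv Ax ((□(A ⟹ B)) ⟹ (A ▷ B))
  | J2 (A B C : ILForm) : ILProv Ax (((A ▷ B) ⋀ (B ▷ C)) ⟹ (A ▷ C))
  | J3 (A B C : ILForm) : ILProv Ax (((A ▷ C) ⋀ (B ▷ C)) ⟹ ((A ⋁ B) ▷ C))
  | J4 (A B : ILForm) : ILProv Ax ((A ▷ B) ⟹ ((◇A) ⟹ (◇B)))
  | J5 (A : ILForm) : ILProv Ax ((◇A) ▷ A)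
  | mp {A B : ILForm} : ILProv Ax (A ⟹ B) → ILProv Ax A → ILProv Ax B
  | nec {A : ILForm} : ILProv Ax A → ILProv Ax (□A)

/-- Substitution of formulas for propositional variables. -/
def ILForm.substVar (σ : ℕ → ILForm) : ILForm → ILForm
  | .var n => σ n
  | .bot => .bot
  | .impl a b => .impl (ILForm.substVar σ a) (ILForm.substVar σ b)
  | .box a => .box (ILForm.substVar σ a)
  | .rhd a b => .rhd (ILForm.substVar σ a) (ILForm.substVar σ b)

/-- All substitution instances of a modal scheme. -/
def instancesOf (A : ILForm) : Set ILForm := {B | ∃ σ : ℕ → ILForm, B = ILForm.substVar σ A}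

/-- Helper for simultaneous replacement of subformula occurrences. -/
def ILForm.hit (ps : List (ILForm × ILForm)) (f : ILForm) : Option ILForm :=
  (ps.find? fun pq => decide (pq.1 = f)).map (·.2)

/-- Simultaneous replacement of (outermost) occurrences of the patterns
`p` by the corresponding `q`, for `(p,q)` in the list `ps`. -/
def ILForm.replL (ps : List (ILForm × ILForm)) : ILForm → ILForm
  | .var n => (ILForm.hit ps (.var n)).getD (.var n)
  | .bot => (ILForm.hit ps .bot).getD .bot
  | .impl a b =>
      (ILForm.hit ps (.impl a b)).getD (.impl (ILForm.replL ps a) (ILForm.replL ps b))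
  | .box a => (ILForm.hit ps (.box a)).getD (.box (ILForm.replL ps a))
  | .rhd a b =>
      (ILForm.hit ps (.rhd a b)).getD (.rhd (ILForm.replL ps a) (ILForm.replL ps b))

/-- The placeholder variables `A_n`, `B_n`, `C_n`, `E_n`. -/
def Av (n : ℕ) : ILForm := .var (4*n)
def Bv (n : ℕ) : ILForm := .var (4*n+1)
def Cv (n : ℕ) : ILForm := .var (4*n+2)
def Ev (n : ℕ) : ILForm := .var (4*n+3)

/-- The slim series `R_n`, defined by the substitutions of the paper:
`R_0 := A_0▷B_0 → ¬(A_0▷¬C_0) ▷ B_0∧□C_0`;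
`R_{2n+1} := R_{2n}[¬(A_n▷¬C_n)/¬(A_n▷¬C_n)∧(E_{n+1}▷◇A_{n+1});
                    B_n∧□C_n/B_n∧□C_n∧(E_{n+1}▷A_{n+1})]`;
`R_{2n+2} := R_{2n+1}[B_n/B_n∧(A_{n+1}▷B_{n+1}); ◇A_{n+1}/¬(A_{n+1}▷¬C_{n+1});
     (E_{n+1}▷A_{n+1})/(E_{n+1}▷A_{n+1})∧(E_{n+1}▷B_{n+1}∧□C_{n+1})]`. -/
def Rser : ℕ → ILForm
  | 0 => (Av 0 ▷ Bv 0) ⟹ ((∼(Av 0 ▷ (∼(Cv 0)))) ▷ ((Bv 0) ⋀ (□(Cv 0))))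
  | n+1 =>
    let k := n / 2
    if n % 2 = 0 then
      ILForm.replL
        [ (∼(Av k ▷ (∼(Cv k))), (∼(Av k ▷ (∼(Cv k)))) ⋀ (Ev (k+1) ▷ (◇(Av (k+1))))),
          ((Bv k) ⋀ (□(Cv k)), ((Bv k) ⋀ (□(Cv k))) ⋀ (Ev (k+1) ▷ Av (k+1))) ]
        (Rser n)
    else
      ILForm.replL
        [ (Bv k, (Bv k) ⋀ (Av (k+1) ▷ Bv (k+1))),
          (◇(Av (k+1)), ∼(Av (k+1) ▷ (∼(Cv (k+1))))),
          (Ev (k+1) ▷ Av (k+1),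
            (Ev (k+1) ▷ Av (k+1)) ⋀ (Ev (k+1) ▷ ((Bv (k+1)) ⋀ (□(Cv (k+1)))))) ]
        (Rser n)

/-- The formulas `X_n` of the well-behaved subhierarchy. -/
def Xt (A B : ℕ → ILForm) : ℕ → ILForm
  | 0 => A 0 ▷ B 0
  | n+1 => A (n+1) ▷ ((B (n+1)) ⋀ (Xt A B n))

/-- The formulas `Y_n` of the well-behaved subhierarchy. -/
def Yt (A C E : ℕ → ILForm) : ℕ → ILForm
  | 0 => ∼(A 0 ▷ (∼(C 0)))
  | n+1 => (∼(A (n+1) ▷ (∼(C (n+1))))) ⋀ (E (n+1) ▷ (Yt A C E n))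

/-- The formulas `Z_n` of the well-behaved subhierarchy. -/
def Zt (A B C E : ℕ → ILForm) : ℕ → ILForm
  | 0 => (B 0) ⋀ (□(C 0))
  | n+1 => (((B (n+1)) ⋀ (Xt A B n)) ⋀ (□(C (n+1)))) ⋀
             ((E (n+1) ▷ A n) ⋀ (E (n+1) ▷ (Zt A B C E n)))

/-- The principles `R̃_n = X_n → Y_n ▷ Z_n`. -/
def Rtilde (A B C E : ℕ → ILForm) (n : ℕ) : ILForm :=
  (Xt A B n) ⟹ ((Yt A C E n) ▷ (Zt A B C E n))

/-- `X_{k-1}`, with the convention `X_{-1} = ⊤`. -/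
def Xminus (A B : ℕ → ILForm) : ℕ → ILForm
  | 0 => ILForm.top
  | n+1 => Xt A B n

/-- `A_{k-1}`, with the convention `A_{-1} = ⊤`. -/
def Aminus (A : ℕ → ILForm) : ℕ → ILForm
  | 0 => ILForm.top
  | n+1 => A n

/-- `Z_{k-1}`, with the convention `Z_{-1} = ⊤`. -/
def Zminus (A B C E : ℕ → ILForm) : ℕ → ILForm
  | 0 => ILForm.top
  | n+1 => Zt A B C E n

/-- Veltman frames. -/
structure Veltman where
  W : Type
  ne : Nonempty W
  R : W → W → Prop
  S : W → W → W → Prop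
  R_trans : ∀ {x y z}, R x y → R y z → R x z
  R_cwf : WellFounded (fun x y => R y x)
  S_dom : ∀ {x y z}, S x y z → R x y ∧ R x z
  S_refl : ∀ {x y}, R x y → S x y y
  S_trans : ∀ {x y z u}, S x y z → S x z u → S x y u
  R_sub_S : ∀ {x y z}, R x y → R y z → S x y z

/-- Forcing in a Veltman model. -/
def force (F : Veltman) (V : ℕ → F.W → Prop) : ILForm → F.W → Prop
  | .var n => fun w => V n w
  | .bot => fun _ => False
  | .impl a b => fun w => force F V a w → force F V b w
  | .box a => fun w => ∀ v, F.R w v → force F V a v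
  | .rhd a b => fun w => ∀ v, F.R w v → force F V a v →
      ∃ u, F.S w v u ∧ force F V b u

/-- A formula is valid on a frame if it is forced at every world under every valuation. -/
def valid (F : Veltman) (A : ILForm) : Prop := ∀ (V : ℕ → F.W → Prop) (w : F.W), force F V A w

/-- The `C`-assuring successor relation `x R^C_⊩ y`. -/
def RC (F : Veltman) (V : ℕ → F.W → Prop) (C : ILForm) (x y : F.W) : Prop :=
  F.R x y ∧ force F V C y ∧ ∀ z, F.S x y z → force F V C z

/-- The ternary relations `G_n` on a Veltman frame. -/
def G (F : Veltman) : ℕ → F.W → F.W → F.W → Prop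
  | 0 => fun x y z => ∀ u, F.R z u → F.S x y u
  | n+1 => fun x y z => ∀ u, F.R z u → F.S x y u ∧ ∀ v, F.S x u v → G F n z u v

/-- The frame conditions `F_n` of the slim hierarchy. -/
def Fcond (F : Veltman) (n : ℕ) : Prop :=
  ∀ w x y z, F.R w x → F.R x y → F.S w y z → G F n x y z

/-- The quaternary relations `B_n` on a Veltman frame. -/
def Bq (F : Veltman) : ℕ → F.W → F.W → F.W → F.W → Prop
  | 0 => fun x1 x0 y0 y1 => F.R x1 x0 ∧ F.R x0 y0 ∧ F.S x1 y0 y1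
  | n+1 => fun x' x0 y0 y' => ∃ xn yn, F.R x' xn ∧ Bq F n xn x0 y0 yn ∧ F.S x' yn y'

/-- The formulas `U_n` of the broad series (with `U_0 := ⊤`, unused). -/
def Ubr (C : ILForm) (D : ℕ → ILForm) : ℕ → ILForm
  | 0 => ILForm.top
  | 1 => ◇(∼(D 1 ▷ (∼C)))
  | n+2 => ◇(((D (n+1)) ▷ (D (n+2))) ⋀ (Ubr C D (n+1)))

/-- The frame conditions `F^n` of the broad series. -/
def FbroadCond (F : Veltman) (n : ℕ) : Prop :=
  ∀ x1 x0 y0 y1, Bq F n x1 x0 y0 y1 → ∀ u, F.R y1 u → F.S x0 y0 u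

/-- The principles `R^n` of the broad series. -/
def Rbroad (A B C : ILForm) (D : ℕ → ILForm) : ℕ → ILForm
  | 0 => (A ▷ B) ⟹ ((∼(A ▷ (∼C))) ▷ (B ⋀ (□C)))
  | n+1 => (A ▷ B) ⟹ (((Ubr C D (n+1)) ⋀ (D (n+1) ▷ A)) ▷ (B ⋀ (□C)))

namespace ILAux

def iffF (A B : ILForm) : ILForm := (A ⟹ B) ⋀ (B ⟹ A)

variable {Ax : Set ILForm}

lemma mp2 {A B C : ILForm} (h : ILProv Ax (A ⟹ (B ⟹ C))) (h1 : ILProv Ax A)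
    (h2 : ILProv Ax B) : ILProv Ax C := (h.mp h1).mp h2

lemma taut_id (A : ILForm) : ILProv Ax (A ⟹ A) := .taut (by
  intro g; simp only [ILForm.evalProp]
  cases ILForm.evalProp g A <;> rfl)

lemma and_intro {A B : ILForm} (h1 : ILProv Ax A) (h2 : ILProv Ax B) :
    ILProv Ax (A ⋀ B) := by
  refine mp2 (.taut ?_) h1 h2
  intro g; simp only [ILForm.evalProp, ILForm.conj, ILForm.neg]
  cases ILForm.evalProp g A <;> cases ILForm.evalProp g B <;> rfl

lemma and_left {A B : ILForm} (h : ILProv Ax (A ⋀ B)) : ILProv Ax A := by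
  refine .mp (.taut ?_) h
  intro g; simp only [ILForm.evalProp, ILForm.conj, ILForm.neg]
  cases ILForm.evalProp g A <;> cases ILForm.evalProp g B <;> rfl

lemma and_right {A B : ILForm} (h : ILProv Ax (A ⋀ B)) : ILProv Ax B := by
  refine .mp (.taut ?_) h
  intro g; simp only [ILForm.evalProp, ILForm.conj, ILForm.neg]
  cases ILForm.evalProp g A <;> cases ILForm.evalProp g B <;> rfl

lemma iff_intro {A B : ILForm} (h1 : ILProv Ax (A ⟹ B)) (h2 : ILProv Ax (B ⟹ A)) :
    ILProv Ax (iffF A B) := and_intro h1 h2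

lemma iff_mp1 {A B : ILForm} (h : ILProv Ax (iffF A B)) : ILProv Ax (A ⟹ B) :=
  and_left h

lemma iff_mp2 {A B : ILForm} (h : ILProv Ax (iffF A B)) : ILProv Ax (B ⟹ A) :=
  and_right h

lemma imp_trans {A B C : ILForm} (h1 : ILProv Ax (A ⟹ B)) (h2 : ILProv Ax (B ⟹ C)) :
    ILProv Ax (A ⟹ C) := by
  refine mp2 (.taut ?_) h1 h2
  intro g; simp only [ILForm.evalProp]
  cases ILForm.evalProp g A <;> cases ILForm.evalProp g B <;>
    cases ILForm.evalProp g C <;> rfl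

lemma iff_refl (A : ILForm) : ILProv Ax (iffF A A) := iff_intro (taut_id A) (taut_id A)

lemma impl_cong {A A' B B' : ILForm} (hA : ILProv Ax (iffF A A'))
    (hB : ILProv Ax (iffF B B')) : ILProv Ax (iffF (A ⟹ B) (A' ⟹ B')) := by
  have t : ∀ X X' Y Y' : ILForm,
      ILProv Ax ((X' ⟹ X) ⟹ ((Y ⟹ Y') ⟹ ((X ⟹ Y) ⟹ (X' ⟹ Y')))) := by
    intro X X' Y Y'
    refine .taut ?_
    intro g; simp only [ILForm.evalProp]
    cases ILForm.evalProp g X <;> cases ILForm.evalProp g X' <;>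
      cases ILForm.evalProp g Y <;> cases ILForm.evalProp g Y' <;> rfl
  exact iff_intro (mp2 (t A A' B B') (iff_mp2 hA) (iff_mp1 hB))
    (mp2 (t A' A B' B) (iff_mp1 hA) (iff_mp2 hB))

lemma box_imp {A B : ILForm} (h : ILProv Ax (A ⟹ B)) : ILProv Ax ((□A) ⟹ (□B)) :=
  .mp (.L1 A B) (.nec h)

lemma box_cong {A B : ILForm} (h : ILProv Ax (iffF A B)) :
    ILProv Ax (iffF (□A) (□B)) :=
  iff_intro (box_imp (iff_mp1 h)) (box_imp (iff_mp2 h))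

lemma rhd_of_imp {A B : ILForm} (h : ILProv Ax (A ⟹ B)) : ILProv Ax (A ▷ B) :=
  .mp (.J1 A B) (.nec h)

lemma rhd_refl (A : ILForm) : ILProv Ax (A ▷ A) := rhd_of_imp (taut_id A)

lemma imp_and_left {X Y Z : ILForm} (hX : ILProv Ax X)
    (hJ : ILProv Ax ((X ⋀ Y) ⟹ Z)) : ILProv Ax (Y ⟹ Z) := by
  refine mp2 (.taut ?_) hX hJ
  intro g; simp only [ILForm.evalProp, ILForm.conj, ILForm.neg]
  cases ILForm.evalProp g X <;> cases ILForm.evalProp g Y <;>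
    cases ILForm.evalProp g Z <;> rfl

lemma imp_and_right {X Y Z : ILForm} (hY : ILProv Ax Y)
    (hJ : ILProv Ax ((X ⋀ Y) ⟹ Z)) : ILProv Ax (X ⟹ Z) := by
  refine mp2 (.taut ?_) hY hJ
  intro g; simp only [ILForm.evalProp, ILForm.conj, ILForm.neg]
  cases ILForm.evalProp g X <;> cases ILForm.evalProp g Y <;>
    cases ILForm.evalProp g Z <;> rfl

lemma rhd_imp_left {A A' B : ILForm} (h : ILProv Ax (A' ⟹ A)) :
    ILProv Ax ((A ▷ B) ⟹ (A' ▷ B)) :=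
  imp_and_left (rhd_of_imp h) (.J2 A' A B)

lemma rhd_imp_right {A B B' : ILForm} (h : ILProv Ax (B ⟹ B')) :
    ILProv Ax ((A ▷ B) ⟹ (A ▷ B')) :=
  imp_and_right (rhd_of_imp h) (.J2 A B B')

lemma rhd_cong {A A' B B' : ILForm} (hA : ILProv Ax (iffF A A'))
    (hB : ILProv Ax (iffF B B')) : ILProv Ax (iffF (A ▷ B) (A' ▷ B')) :=
  iff_intro (imp_trans (rhd_imp_left (iff_mp2 hA)) (rhd_imp_right (iff_mp1 hB)))
    (imp_trans (rhd_imp_left (iff_mp1 hA)) (rhd_imp_right (iff_mp2 hB)))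

/-- Key equivalence 1: from `⊢ P`, `⊢ Q ↔ Q ∧ P`. -/
lemma iff_and_of_prov {P Q : ILForm} (hP : ILProv Ax P) :
    ILProv Ax (iffF Q (Q ⋀ P)) := by
  refine .mp (.taut ?_) hP
  intro g; simp only [ILForm.evalProp, iffF, ILForm.conj, ILForm.neg]
  cases ILForm.evalProp g P <;> cases ILForm.evalProp g Q <;> rfl

/-- Key equivalence 3 helper: from `⊢ P → Q`, `⊢ P ↔ P ∧ Q`. -/
lemma iff_and_of_imp {P Q : ILForm} (hPQ : ILProv Ax (P ⟹ Q)) :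
    ILProv Ax (iffF P (P ⋀ Q)) := by
  refine .mp (.taut ?_) hPQ
  intro g; simp only [ILForm.evalProp, iffF, ILForm.conj, ILForm.neg]
  cases ILForm.evalProp g P <;> cases ILForm.evalProp g Q <;> rfl

lemma prov_top : ILProv Ax ILForm.top := .taut (by intro g; rfl)

lemma prov_box_top : ILProv Ax (□ILForm.top) := .nec prov_top

/-- Key equivalence 2: `⊢ ◇A ↔ ¬(A ▷ ¬⊤)`. -/
lemma dia_iff (A : ILForm) : ILProv Ax (iffF (◇A) (∼(A ▷ (∼ILForm.top)))) := by
  have h1 : ILProv Ax ((A ▷ (∼ILForm.top)) ⟹ ((◇A) ⟹ (◇(∼ILForm.top)))) :=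
    .J4 A (∼ILForm.top)
  have h2 : ILProv Ax (∼(◇(∼ILForm.top))) := by
    have ht : ILProv Ax (□(∼(∼ILForm.top))) := by
      refine .nec (.taut ?_)
      intro g; rfl
    refine .mp (.taut ?_) ht
    intro g
    simp only [ILForm.evalProp, ILForm.dia, ILForm.neg, ILForm.top]
    cases g (ILForm.box (((ILForm.bot ⟹ ILForm.bot) ⟹ ILForm.bot) ⟹ ILForm.bot)) <;> rfl
  have fwd : ILProv Ax ((◇A) ⟹ (∼(A ▷ (∼ILForm.top)))) := by
    refine mp2 (.taut ?_) h1 h2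
    intro g
    simp only [ILForm.evalProp, ILForm.dia, ILForm.neg, ILForm.top]
    cases g (A ▷ ((ILForm.bot ⟹ ILForm.bot) ⟹ ILForm.bot)) <;>
      cases g (ILForm.box (A ⟹ ILForm.bot)) <;>
      cases g (ILForm.box (((ILForm.bot ⟹ ILForm.bot) ⟹ ILForm.bot) ⟹ ILForm.bot)) <;> rfl
  have h3 : ILProv Ax ((□(∼A)) ⟹ (A ▷ (∼ILForm.top))) := by
    have s1 : ILProv Ax ((∼A) ⟹ (A ⟹ (∼ILForm.top))) := by
      refine .taut ?_
      intro g; simp only [ILForm.evalProp, ILForm.neg, ILForm.top]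
      cases ILForm.evalProp g A <;> rfl
    exact imp_trans (box_imp s1) (.J1 A (∼ILForm.top))
  have bwd : ILProv Ax ((∼(A ▷ (∼ILForm.top))) ⟹ (◇A)) := by
    refine .mp (.taut ?_) h3
    intro g
    simp only [ILForm.evalProp, ILForm.dia, ILForm.neg, ILForm.top]
    cases g (A ▷ ((ILForm.bot ⟹ ILForm.bot) ⟹ ILForm.bot)) <;>
      cases g (ILForm.box (A ⟹ ILForm.bot)) <;> rfl
  exact iff_intro fwd bwd

/-! ### Syntactic lemmas about `replL` and `substVar` -/

lemma hit_eq_some {ps : List (ILForm × ILForm)} {f q : ILForm}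
    (h : ILForm.hit ps f = some q) : (f, q) ∈ ps := by
  unfold ILForm.hit at h
  rcases Option.map_eq_some_iff.1 h with ⟨pq, hfind, hq⟩
  have hmem := List.mem_of_find?_eq_some hfind
  have hp := List.find?_some hfind
  simp only [decide_eq_true_eq] at hp
  rw [← hq, ← hp]
  exact hmem

lemma hit_map (g : ILForm → ILForm) (ps : List (ILForm × ILForm)) (f : ILForm) :
    ILForm.hit (ps.map fun pq => (pq.1, g pq.2)) f = (ILForm.hit ps f).map g := by
  induction ps with
  | nil => rfl
  | cons pq ps ih =>
    unfold ILForm.hit at *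
    simp only [List.map_cons, List.find?_cons]
    by_cases h : pq.1 = f
    · simp [h]
    · simp only [h, decide_false]
      exact ih

/-- The general replacement-of-provable-equivalents theorem. -/
lemma replL_iff (ps : List (ILForm × ILForm))
    (h : ∀ pq ∈ ps, ILProv Ax (iffF pq.1 pq.2)) :
    ∀ f, ILProv Ax (iffF f (ILForm.replL ps f)) := by
  intro f
  induction f with
  | var n =>
    rw [ILForm.replL]
    cases hh : ILForm.hit ps (.var n) with
    | none => simpa using iff_refl _
    | some q => simpa using h _ (hit_eq_some hh)
  | bot =>
    rw [ILForm.replL]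
    cases hh : ILForm.hit ps .bot with
    | none => simpa using iff_refl _
    | some q => simpa using h _ (hit_eq_some hh)
  | impl a b iha ihb =>
    rw [ILForm.replL]
    cases hh : ILForm.hit ps (.impl a b) with
    | none => simpa using impl_cong iha ihb
    | some q => simpa using h _ (hit_eq_some hh)
  | box a iha =>
    rw [ILForm.replL]
    cases hh : ILForm.hit ps (.box a) with
    | none => simpa using box_cong iha
    | some q => simpa using h _ (hit_eq_some hh)
  | rhd a b iha ihb =>
    rw [ILForm.replL]
    cases hh : ILForm.hit ps (.rhd a b) with
    | none => simpa using rhd_cong iha ihb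
    | some q => simpa using h _ (hit_eq_some hh)

/-- Variable occurrence. -/
def occF (v : ℕ) : ILForm → Prop
  | .var n => n = v
  | .bot => False
  | .impl a b => occF v a ∨ occF v b
  | .box a => occF v a
  | .rhd a b => occF v a ∨ occF v b

lemma substVar_eq_self {σ : ℕ → ILForm} :
    ∀ f : ILForm, (∀ v, occF v f → σ v = .var v) → f.substVar σ = f := by
  intro f
  induction f with
  | var n => intro h; exact h n rfl
  | bot => intro _; rfl
  | impl a b iha ihb =>
    intro h
    rw [ILForm.substVar, iha (fun v hv => h v (Or.inl hv)),
      ihb (fun v hv => h v (Or.inr hv))]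
  | box a iha =>
    intro h
    rw [ILForm.substVar, iha (fun v hv => h v hv)]
  | rhd a b iha ihb =>
    intro h
    rw [ILForm.substVar, iha (fun v hv => h v (Or.inl hv)),
      ihb (fun v hv => h v (Or.inr hv))]

lemma occ_replL {v : ℕ} {ps : List (ILForm × ILForm)} :
    ∀ f, occF v (ILForm.replL ps f) → occF v f ∨ ∃ pq ∈ ps, occF v pq.2 := by
  intro f
  induction f with
  | var n =>
    rw [ILForm.replL]
    cases hh : ILForm.hit ps (.var n) with
    | none => intro h; exact Or.inl h
    | some q => intro h; exact Or.inr ⟨_, hit_eq_some hh, h⟩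
  | bot =>
    rw [ILForm.replL]
    cases hh : ILForm.hit ps .bot with
    | none => intro h; exact Or.inl h
    | some q => intro h; exact Or.inr ⟨_, hit_eq_some hh, h⟩
  | impl a b iha ihb =>
    rw [ILForm.replL]
    cases hh : ILForm.hit ps (.impl a b) with
    | none =>
      intro h
      rcases h with h | h
      · rcases iha h with h' | h'
        · exact Or.inl (Or.inl h')
        · exact Or.inr h'
      · rcases ihb h with h' | h'
        · exact Or.inl (Or.inr h')
        · exact Or.inr h'
    | some q => intro h; exact Or.inr ⟨_, hit_eq_some hh, h⟩
  | box a iha =>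
    rw [ILForm.replL]
    cases hh : ILForm.hit ps (.box a) with
    | none =>
      intro h
      rcases iha h with h' | h'
      · exact Or.inl h'
      · exact Or.inr h'
    | some q => intro h; exact Or.inr ⟨_, hit_eq_some hh, h⟩
  | rhd a b iha ihb =>
    rw [ILForm.replL]
    cases hh : ILForm.hit ps (.rhd a b) with
    | none =>
      intro h
      rcases h with h | h
      · rcases iha h with h' | h'
        · exact Or.inl (Or.inl h')
        · exact Or.inr h'
      · rcases ihb h with h' | h'
        · exact Or.inl (Or.inr h')
        · exact Or.inr h'
    | some q => intro h; exact Or.inr ⟨_, hit_eq_some hh, h⟩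

lemma substVar_replL (σ : ℕ → ILForm) (ps : List (ILForm × ILForm)) :
    ∀ f : ILForm, f.substVar σ = f →
      (∀ pq ∈ ps, (pq.1 : ILForm).substVar σ = pq.1) →
      (ILForm.replL ps f).substVar σ =
        ILForm.replL (ps.map fun pq => (pq.1, pq.2.substVar σ)) f := by
  intro f
  induction f with
  | var n =>
    intro hf _
    rw [ILForm.replL, ILForm.replL, hit_map]
    cases hh : ILForm.hit ps (.var n) with
    | none => simpa using hf
    | some q => simp
  | bot =>
    intro _ _
    rw [ILForm.replL, ILForm.replL, hit_map]
    cases hh : ILForm.hit ps .bot with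
    | none => rfl
    | some q => simp
  | impl a b iha ihb =>
    intro hf hps
    rw [ILForm.substVar] at hf
    injection hf with ha hb
    rw [ILForm.replL, ILForm.replL, hit_map]
    cases hh : ILForm.hit ps (.impl a b) with
    | none => simp [ILForm.substVar, iha ha hps, ihb hb hps]
    | some q => simp
  | box a iha =>
    intro hf hps
    rw [ILForm.substVar] at hf
    injection hf with ha
    rw [ILForm.replL, ILForm.replL, hit_map]
    cases hh : ILForm.hit ps (.box a) with
    | none => simp [ILForm.substVar, iha ha hps]
    | some q => simp
  | rhd a b iha ihb =>
    intro hf hps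
    rw [ILForm.substVar] at hf
    injection hf with ha hb
    rw [ILForm.replL, ILForm.replL, hit_map]
    cases hh : ILForm.hit ps (.rhd a b) with
    | none => simp [ILForm.substVar, iha ha hps, ihb hb hps]
    | some q => simp

lemma imp_and_intro_right {A P : ILForm} (hP : ILProv Ax P) :
    ILProv Ax (A ⟹ (A ⋀ P)) := by
  refine .mp (.taut ?_) hP
  intro g; simp only [ILForm.evalProp, ILForm.conj, ILForm.neg]
  cases ILForm.evalProp g A <;> cases ILForm.evalProp g P <;> rfl

/-! ### Unfolding the recursion for `Rser` -/

lemma Rser_odd (k : ℕ) : Rser (2*k+1) =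
    ILForm.replL
      [ (∼(Av k ▷ (∼(Cv k))), (∼(Av k ▷ (∼(Cv k)))) ⋀ (Ev (k+1) ▷ (◇(Av (k+1))))),
        ((Bv k) ⋀ (□(Cv k)), ((Bv k) ⋀ (□(Cv k))) ⋀ (Ev (k+1) ▷ Av (k+1))) ]
      (Rser (2*k)) := by
  have h1 : (2*k) % 2 = 0 := by omega
  have h2 : (2*k) / 2 = k := by omega
  rw [Rser]
  simp only [h1, h2, if_pos]

lemma Rser_even (k : ℕ) : Rser (2*k+2) =
    ILForm.replL
      [ (Bv k, (Bv k) ⋀ (Av (k+1) ▷ Bv (k+1))),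
        (◇(Av (k+1)), ∼(Av (k+1) ▷ (∼(Cv (k+1))))),
        (Ev (k+1) ▷ Av (k+1),
          (Ev (k+1) ▷ Av (k+1)) ⋀ (Ev (k+1) ▷ ((Bv (k+1)) ⋀ (□(Cv (k+1)))))) ]
      (Rser (2*k+1)) := by
  have h0 : 2*k+2 = (2*k+1)+1 := by omega
  have h1 : (2*k+1) % 2 = 1 := by omega
  have h2 : (2*k+1) / 2 = k := by omega
  rw [h0, Rser]
  simp only [h1, h2]
  norm_num

/-! ### Variable bounds for `Rser` -/

lemma Rser_occ : ∀ k : ℕ,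
    (∀ v, occF v (Rser (2*k)) → v ≤ 4*k+3) ∧
    (∀ v, occF v (Rser (2*k+1)) → v ≤ 4*k+3 ∨ v = 4*k+4 ∨ v = 4*k+7) := by
  have odd_step : ∀ k : ℕ, (∀ v, occF v (Rser (2*k)) → v ≤ 4*k+3) →
      (∀ v, occF v (Rser (2*k+1)) → v ≤ 4*k+3 ∨ v = 4*k+4 ∨ v = 4*k+7) := by
    intro k hk v hv
    rw [Rser_odd] at hv
    rcases occ_replL _ hv with h | ⟨pq, hmem, hocc⟩
    · exact Or.inl (hk v h)
    · simp only [List.mem_cons, List.mem_singleton, List.not_mem_nil, or_false] at hmem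
      rcases hmem with rfl | rfl <;>
        simp only [occF, Av, Bv, Cv, Ev, ILForm.conj, ILForm.neg, ILForm.dia, or_false, false_or] at hocc <;>
        revert hocc <;> omega
  intro k
  induction k with
  | zero =>
    have h0 : ∀ v, occF v (Rser 0) → v ≤ 3 := by
      intro v hv
      rw [Rser] at hv
      simp only [occF, Av, Bv, Cv, ILForm.conj, ILForm.neg, or_false, false_or] at hv
      revert hv
      omega
    exact ⟨fun v hv => h0 v hv, odd_step 0 (fun v hv => h0 v hv)⟩
  | succ k ih =>
    have heven : ∀ v, occF v (Rser (2*(k+1))) → v ≤ 4*(k+1)+3 := by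
      intro v hv
      have h0 : 2*(k+1) = 2*k+2 := by omega
      rw [h0, Rser_even] at hv
      rcases occ_replL _ hv with h | ⟨pq, hmem, hocc⟩
      · rcases ih.2 v h with h | h | h <;> omega
      · simp only [List.mem_cons, List.mem_singleton, List.not_mem_nil, or_false] at hmem
        rcases hmem with rfl | rfl | rfl <;>
          simp only [occF, Av, Bv, Cv, Ev, ILForm.conj, ILForm.neg, ILForm.dia, or_false, false_or] at hocc <;>
          revert hocc <;> omega
    exact ⟨heven, odd_step (k+1) heven⟩

/-! ### The substitution `B_{n+1} := A_{n+1}`, `C_{n+1} := ⊤` -/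

def sig (n : ℕ) : ℕ → ILForm := fun v =>
  if v = 4*(n+1)+1 then .var (4*(n+1))
  else if v = 4*(n+1)+2 then ILForm.top
  else .var v

def psn (n : ℕ) : List (ILForm × ILForm) :=
  [ (Bv n, (Bv n) ⋀ (Av (n+1) ▷ Bv (n+1))),
    (◇(Av (n+1)), ∼(Av (n+1) ▷ (∼(Cv (n+1))))),
    (Ev (n+1) ▷ Av (n+1),
      (Ev (n+1) ▷ Av (n+1)) ⋀ (Ev (n+1) ▷ ((Bv (n+1)) ⋀ (□(Cv (n+1)))))) ]

lemma Rser_even' (k : ℕ) : Rser (2*k+2) = ILForm.replL (psn k) (Rser (2*k+1)) :=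
  Rser_even k

lemma hfix (n : ℕ) : (Rser (2*n+1)).substVar (sig n) = Rser (2*n+1) := by
  apply substVar_eq_self
  intro v hv
  have hb := (Rser_occ n).2 v hv
  show (if v = 4*(n+1)+1 then _ else _) = _
  rw [if_neg (by omega), if_neg (by omega)]

lemma hps (n : ℕ) : ∀ pq ∈ psn n, (pq.1 : ILForm).substVar (sig n) = pq.1 := by
  intro pq hmem
  simp only [psn, List.mem_cons, List.not_mem_nil, or_false] at hmem
  rcases hmem with rfl | rfl | rfl <;>
    simp only [ILForm.substVar, ILForm.dia, ILForm.neg, Av, Bv, Ev, sig] <;>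
    split_ifs <;> first | rfl | (exfalso; omega)

lemma psn_map (n : ℕ) :
    (psn n).map (fun pq => (pq.1, pq.2.substVar (sig n))) =
    [ (Bv n, (Bv n) ⋀ (Av (n+1) ▷ Av (n+1))),
      (◇(Av (n+1)), ∼(Av (n+1) ▷ (∼ILForm.top))),
      (Ev (n+1) ▷ Av (n+1),
        (Ev (n+1) ▷ Av (n+1)) ⋀ (Ev (n+1) ▷ ((Av (n+1)) ⋀ (□ILForm.top)))) ] := by
  simp only [psn, List.map_cons, List.map_nil, sig, ILForm.substVar, ILForm.conj,
    ILForm.neg, ILForm.dia, ILForm.top, Av, Bv, Cv, Ev]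
  split_ifs <;> first | rfl | (exfalso; omega)

end ILAux
/-- In IL, the principle `R_{2n+2}` implies `R_{2n+1}`. -/
theorem stmt1 : ∀ n : ℕ, ILProv (instancesOf (Rser (2*n+2))) (Rser (2*n+1)) := by
  intro n
  have hax : ILProv (instancesOf (Rser (2*n+2))) ((Rser (2*n+2)).substVar (ILAux.sig n)) :=
    .ax ⟨_, rfl⟩
  have heq : (Rser (2*n+2)).substVar (ILAux.sig n) =
      ILForm.replL
        [ (Bv n, (Bv n) ⋀ (Av (n+1) ▷ Av (n+1))),
          (◇(Av (n+1)), ∼(Av (n+1) ▷ (∼ILForm.top))),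
          (Ev (n+1) ▷ Av (n+1),
            (Ev (n+1) ▷ Av (n+1)) ⋀ (Ev (n+1) ▷ ((Av (n+1)) ⋀ (□ILForm.top)))) ]
        (Rser (2*n+1)) := by
    rw [ILAux.Rser_even' n,
      ILAux.substVar_replL (ILAux.sig n) (ILAux.psn n) _ (ILAux.hfix n) (ILAux.hps n),
      ILAux.psn_map n]
  rw [heq] at hax
  have hiff := ILAux.replL_iff (Ax := instancesOf (Rser (2*n+2)))
    [ (Bv n, (Bv n) ⋀ (Av (n+1) ▷ Av (n+1))),
      (◇(Av (n+1)), ∼(Av (n+1) ▷ (∼ILForm.top))),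
      (Ev (n+1) ▷ Av (n+1),
        (Ev (n+1) ▷ Av (n+1)) ⋀ (Ev (n+1) ▷ ((Av (n+1)) ⋀ (□ILForm.top)))) ]
    ?_ (Rser (2*n+1))
  · exact (ILAux.iff_mp2 hiff).mp hax
  · intro pq hmem
    simp only [List.mem_cons, List.not_mem_nil, or_false] at hmem
    rcases hmem with rfl | rfl | rfl
    · exact ILAux.iff_and_of_prov (ILAux.rhd_refl _)
    · exact ILAux.dia_iff _
    · exact ILAux.iff_and_of_imp
        (ILAux.rhd_imp_right (ILAux.imp_and_intro_right ILAux.prov_box_top))
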